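/- Let (A,D) be a Γ-Cartan pair. Then any approximate unit for D is an approximate unit for A. -/

import Mathlib

open Filter Topology

set_option linter.unusedSectionVars false

section Aux

variable {A : Type*} [NormedRing A] [StarRing A] [CStarRing A]
  {ι : Type*} {l : Filter ι}

/-- If the squared norms tend to zero, so does the sequence. -/
lemma gc8_tendsto_of_sq {x : ι → A}
    (h : Tendsto (fun i => ‖x i‖ * ‖x i‖) l (nhds 0)) :
    Tendsto x l (nhds 0) := by
  rw [tendsto_zero_iff_norm_tendsto_zero]
  have h2 : Tendsto (fun i => Real.sqrt (‖x i‖ * ‖x i‖)) l (nhds 0) := by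
    have := (Real.continuous_sqrt.tendsto 0).comp h
    simpa [Function.comp_def] using this
  have heq : (fun i => ‖x i‖) = fun i => Real.sqrt (‖x i‖ * ‖x i‖) := by
    funext i; rw [Real.sqrt_mul_self (norm_nonneg _)]
  rw [heq]; exact h2

/-- Multiplication by a norm-bounded family preserves tendsto-to-zero (left). -/
lemma gc8_mul_tendsto_zero_left (e : ι → A) (hbd : ∀ i, ‖e i‖ ≤ 1) {y : ι → A}
    (hy : Tendsto y l (nhds 0)) : Tendsto (fun i => e i * y i) l (nhds 0) := by
  rw [tendsto_zero_iff_norm_tendsto_zero] at hy ⊢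
  refine squeeze_zero (fun i => norm_nonneg _) (fun i => ?_) hy
  calc ‖e i * y i‖ ≤ ‖e i‖ * ‖y i‖ := norm_mul_le _ _
    _ ≤ 1 * ‖y i‖ := mul_le_mul_of_nonneg_right (hbd i) (norm_nonneg _)
    _ = ‖y i‖ := one_mul _

/-- The core estimate: if `e i • b → b` on both sides for `b = a * star a`
(resp. `b = star a * a`), then `e i * a → a` (resp. `a * e i → a`). -/
lemma gc8_key_left (e : ι → A) (hsa : ∀ i, star (e i) = e i) (hbd : ∀ i, ‖e i‖ ≤ 1)
    (a : A)
    (h1 : Tendsto (fun i => e i * (a * star a)) l (nhds (a * star a)))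
    (h2 : Tendsto (fun i => (a * star a) * e i) l (nhds (a * star a))) :
    Tendsto (fun i => e i * a) l (nhds a) := by
  set b := a * star a with hb
  rw [← tendsto_sub_nhds_zero_iff]
  apply gc8_tendsto_of_sq
  have hcalc : ∀ i, ‖e i * a - a‖ * ‖e i * a - a‖
      = ‖e i * (b * e i - b) + (e i * b - b) - (e i * b - b) - (b * e i - b)‖ := by
    intro i
    rw [← CStarRing.norm_self_mul_star (x := e i * a - a)]
    congr 1
    have : star (e i * a - a) = star a * e i - star a := by
      rw [star_sub, star_mul, hsa]
    rw [this, hb]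
    noncomm_ring
  have h1' : Tendsto (fun i => e i * b - b) l (nhds 0) := tendsto_sub_nhds_zero_iff.2 h1
  have h2' : Tendsto (fun i => b * e i - b) l (nhds 0) := tendsto_sub_nhds_zero_iff.2 h2
  have h3 : Tendsto (fun i => e i * (b * e i - b) + (e i * b - b) - (e i * b - b)
      - (b * e i - b)) l (nhds 0) := by
    have := (((gc8_mul_tendsto_zero_left e hbd h2').add h1').sub h1').sub h2'
    simpa using this
  rw [tendsto_zero_iff_norm_tendsto_zero] at h3
  simpa only [hcalc] using h3

lemma gc8_key_right (e : ι → A) (hsa : ∀ i, star (e i) = e i) (hbd : ∀ i, ‖e i‖ ≤ 1)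
    (a : A)
    (h1 : Tendsto (fun i => e i * (star a * a)) l (nhds (star a * a)))
    (h2 : Tendsto (fun i => (star a * a) * e i) l (nhds (star a * a))) :
    Tendsto (fun i => a * e i) l (nhds a) := by
  set b := star a * a with hb
  rw [← tendsto_sub_nhds_zero_iff]
  apply gc8_tendsto_of_sq
  have hcalc : ∀ i, ‖a * e i - a‖ * ‖a * e i - a‖
      = ‖e i * (b * e i - b) + (e i * b - b) - (e i * b - b) - (b * e i - b)‖ := by
    intro i
    rw [← CStarRing.norm_star_mul_self (x := a * e i - a)]
    congr 1
    have : star (a * e i - a) = e i * star a - star a := by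
      rw [star_sub, star_mul, hsa]
    rw [this, hb]
    noncomm_ring
  have h1' : Tendsto (fun i => e i * b - b) l (nhds 0) := tendsto_sub_nhds_zero_iff.2 h1
  have h2' : Tendsto (fun i => b * e i - b) l (nhds 0) := tendsto_sub_nhds_zero_iff.2 h2
  have h3 : Tendsto (fun i => e i * (b * e i - b) + (e i * b - b) - (e i * b - b)
      - (b * e i - b)) l (nhds 0) := by
    have := (((gc8_mul_tendsto_zero_left e hbd h2').add h1').sub h1').sub h2'
    simpa using this
  rw [tendsto_zero_iff_norm_tendsto_zero] at h3
  simpa only [hcalc] using h3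


end Aux

/-- Let `(A,D)` be a `Γ`-Cartan pair.  Then any approximate unit for `D` is an approximate unit for `A`. -/
theorem gamma_cartan_stmt8
    {A : Type*} [NormedRing A] [StarRing A] [CStarRing A] [NormedAlgebra ℂ A]
    [CompleteSpace A] [StarModule ℂ A] [PartialOrder A] [StarOrderedRing A]
    {Γ : Type*} [AddCommGroup Γ]
    -- `A` is topologically graded by `Γ` (with linearly independent graded subspaces):
    (Agr : Γ → Submodule ℂ A)
    (hgr_closed : ∀ t, IsClosed (Agr t : Set A))
    (hgr_mul : ∀ s t : Γ, ∀ a ∈ Agr t, ∀ b ∈ Agr s, a * b ∈ Agr (t + s))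
    (hgr_star : ∀ t : Γ, ∀ a ∈ Agr t, star a ∈ Agr (-t))
    (hgr_indep : iSupIndep Agr)
    (hgr_dense : Dense (↑(⨆ t, Agr t) : Set A))
    -- with a faithful conditional expectation `E0 = Φ₀` onto the degree-zero subspace `A₀`:
    (E0 : A →ₗ[ℂ] A)
    (hE0mem : ∀ a, E0 a ∈ Agr 0)
    (hE0fix : ∀ a ∈ Agr 0, E0 a = a)
    (hE0t : ∀ t : Γ, t ≠ 0 → ∀ a ∈ Agr t, E0 a = 0)
    (hE0star : ∀ a, E0 (star a) = star (E0 a))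
    (hE0contr : ∀ a, ‖E0 a‖ ≤ ‖a‖)
    (hE0pos : ∀ a : A, 0 ≤ a → 0 ≤ E0 a)
    (hE0bimod : ∀ a : A, ∀ b ∈ Agr 0, E0 (b * a) = b * E0 a ∧ E0 (a * b) = E0 a * b)
    (hE0faith : ∀ a : A, E0 (star a * a) = 0 → a = 0)
    -- `D` is a Cartan subalgebra of `A₀`: a closed abelian *-subalgebra,
    (D : StarSubalgebra ℂ A)
    (hD0 : (D : Set A) ⊆ (Agr 0 : Set A))
    (hDclosed : IsClosed (D : Set A))
    (hDcomm : ∀ d ∈ D, ∀ e ∈ D, d * e = e * d)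
    -- maximal abelian in `A₀`,
    (hDmasa : ∀ a ∈ Agr 0, (∀ d ∈ D, a * d = d * a) → a ∈ D)
    -- containing an approximate unit for `A₀`,
    (hDau : ∃ (ι : Type) (l : Filter ι) (e : ι → A), l.NeBot ∧
      (∀ i, e i ∈ D ∧ 0 ≤ e i ∧ ‖e i‖ ≤ 1) ∧
      ∀ a ∈ Agr 0, Filter.Tendsto (fun i => e i * a) l (nhds a) ∧
        Filter.Tendsto (fun i => a * e i) l (nhds a))
    -- whose normalizers in `A₀` generate `A₀`,
    (hD0gen : ∀ a ∈ Agr 0, a ∈ closure (↑(Submodule.span ℂ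
      {n : A | n ∈ Agr 0 ∧ ∀ d ∈ D, n * d * star n ∈ D ∧ star n * d * n ∈ D}) : Set A))
    -- with a faithful conditional expectation `ED = E` of `A₀` onto `D`:
    (ED : A →ₗ[ℂ] A)
    (hEDmem : ∀ a, ED a ∈ D)
    (hEDfix : ∀ d ∈ D, ED d = d)
    (hEDstar : ∀ a, ED (star a) = star (ED a))
    (hEDcontr : ∀ a, ‖ED a‖ ≤ ‖a‖)
    (hEDpos : ∀ a : A, 0 ≤ a → 0 ≤ ED a)
    (hEDbimod : ∀ a : A, ∀ d ∈ D, ED (d * a) = d * ED a ∧ ED (a * d) = ED a * d)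
    (hEDfaith : ∀ a ∈ Agr 0, ED (star a * a) = 0 → a = 0)
    -- and the normalizers `N(A,D)` of `D` in `A` densely span `A`:
    (hNdense : Dense (↑(Submodule.span ℂ
      {n : A | ∀ d ∈ D, n * d * star n ∈ D ∧ star n * d * n ∈ D}) : Set A))
    -- `(e_i)` is an approximate unit for `D`:
    {ι : Type*} (l : Filter ι) [l.NeBot] (e : ι → A)
    (he_mem : ∀ i, e i ∈ D)
    (he_pos : ∀ i, 0 ≤ e i)
    (he_norm : ∀ i, ‖e i‖ ≤ 1)
    (he_au : ∀ d ∈ D, Filter.Tendsto (fun i => e i * d) l (nhds d) ∧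
      Filter.Tendsto (fun i => d * e i) l (nhds d)) :
    -- then `(e_i)` is an approximate unit for `A`:
    ∀ a : A, Filter.Tendsto (fun i => e i * a) l (nhds a) ∧
      Filter.Tendsto (fun i => a * e i) l (nhds a) := by
  have hsa : ∀ i, star (e i) = e i := fun i => (IsSelfAdjoint.of_nonneg (he_pos i)).star_eq
  set P : A → Prop := fun a => Filter.Tendsto (fun i => e i * a) l (nhds a) ∧
      Filter.Tendsto (fun i => a * e i) l (nhds a) with hP
  -- stability of P
  have hP0 : P 0 := by
    constructor <;> simp [hP, tendsto_const_nhds]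
  have hPadd : ∀ x y, P x → P y → P (x + y) := by
    intro x y hx hy
    constructor
    · have := hx.1.add hy.1
      simpa [mul_add] using this
    · have := hx.2.add hy.2
      simpa [add_mul] using this
  have hPsmul : ∀ (c : ℂ) (x : A), P x → P (c • x) := by
    intro c x hx
    constructor
    · have := hx.1.const_smul c
      simpa [mul_smul_comm, smul_smul] using this
    · have := hx.2.const_smul c
      simpa [smul_mul_assoc] using this
  -- P passes to closures
  have hPclos : ∀ (M : Set A), (∀ b ∈ M, P b) → ∀ a ∈ closure M, P a := by
    intro M hM a ha
    constructor
    · rw [Metric.tendsto_nhds]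
      intro ε hε
      obtain ⟨b, hbM, hab⟩ := Metric.mem_closure_iff.mp ha (ε/3) (by positivity)
      have hb := (hM b hbM).1
      rw [Metric.tendsto_nhds] at hb
      filter_upwards [hb (ε/3) (by positivity)] with i hi
      rw [dist_eq_norm] at hab hi ⊢
      have hdecomp : e i * a - a = (e i * (a - b)) + (e i * b - b) + (b - a) := by
        rw [mul_sub]; abel
      have hbound : ‖e i * (a - b)‖ ≤ ‖a - b‖ := by
        calc ‖e i * (a - b)‖ ≤ ‖e i‖ * ‖a - b‖ := norm_mul_le _ _
          _ ≤ 1 * ‖a - b‖ := mul_le_mul_of_nonneg_right (he_norm i) (norm_nonneg _)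
          _ = ‖a - b‖ := one_mul _
      calc ‖e i * a - a‖ ≤ ‖e i * (a - b)‖ + ‖e i * b - b‖ + ‖b - a‖ := by
            rw [hdecomp]; exact norm_add₃_le
        _ ≤ ‖a - b‖ + ‖e i * b - b‖ + ‖a - b‖ := by
            rw [norm_sub_rev (a := b)]; gcongr
        _ < ε/3 + ε/3 + ε/3 := by
            apply add_lt_add (add_lt_add hab hi) hab
        _ = ε := by ring
    · rw [Metric.tendsto_nhds]
      intro ε hε
      obtain ⟨b, hbM, hab⟩ := Metric.mem_closure_iff.mp ha (ε/3) (by positivity)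
      have hb := (hM b hbM).2
      rw [Metric.tendsto_nhds] at hb
      filter_upwards [hb (ε/3) (by positivity)] with i hi
      rw [dist_eq_norm] at hab hi ⊢
      have hdecomp : a * e i - a = ((a - b) * e i) + (b * e i - b) + (b - a) := by
        rw [sub_mul]; abel
      have hbound : ‖(a - b) * e i‖ ≤ ‖a - b‖ := by
        calc ‖(a - b) * e i‖ ≤ ‖a - b‖ * ‖e i‖ := norm_mul_le _ _
          _ ≤ ‖a - b‖ * 1 := mul_le_mul_of_nonneg_left (he_norm i) (norm_nonneg _)
          _ = ‖a - b‖ := mul_one _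
      calc ‖a * e i - a‖ ≤ ‖(a - b) * e i‖ + ‖b * e i - b‖ + ‖b - a‖ := by
            rw [hdecomp]; exact norm_add₃_le
        _ ≤ ‖a - b‖ + ‖b * e i - b‖ + ‖a - b‖ := by
            rw [norm_sub_rev (a := b)]; gcongr
        _ < ε/3 + ε/3 + ε/3 := by
            apply add_lt_add (add_lt_add hab hi) hab
        _ = ε := by ring
  -- P holds on D
  have hPD : ∀ d ∈ D, P d := fun d hd => he_au d hd
  -- the key lemma
  have hkey : ∀ a : A, P (a * star a) → P (star a * a) → P a := by
    intro a h1 h2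
    exact ⟨gc8_key_left e hsa he_norm a h1.1 h1.2,
      gc8_key_right e hsa he_norm a h2.1 h2.2⟩
  -- normalizers of D in A₀ satisfy P
  have hnorm0 : ∀ n ∈ {n : A | n ∈ Agr 0 ∧ ∀ d ∈ D, n * d * star n ∈ D ∧ star n * d * n ∈ D},
      P n := by
    rintro n ⟨hn0, hnd⟩
    obtain ⟨ι', l', u, hne, hu, hconv⟩ := hDau
    haveI : l'.NeBot := hne
    have hstarn : star n ∈ Agr 0 := by
      have := hgr_star 0 n hn0; rwa [neg_zero] at this
    have h1 : n * star n ∈ D := by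
      have hconv' := (hconv (star n) hstarn).1
      have ht : Filter.Tendsto (fun j => n * (u j * star n)) l' (nhds (n * star n)) :=
        hconv'.const_mul n
      refine hDclosed.mem_of_tendsto ht ?_
      filter_upwards with j
      have := (hnd (u j) (hu j).1).1
      simpa [mul_assoc] using this
    have h2 : star n * n ∈ D := by
      have hconv' := (hconv n hn0).1
      have ht : Filter.Tendsto (fun j => star n * (u j * n)) l' (nhds (star n * n)) :=
        hconv'.const_mul (star n)
      refine hDclosed.mem_of_tendsto ht ?_
      filter_upwards with j
      have := (hnd (u j) (hu j).1).2
      simpa [mul_assoc] using this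
    exact hkey n (hPD _ h1) (hPD _ h2)
  -- P holds on A₀
  have hPA0 : ∀ a ∈ Agr 0, P a := by
    intro a ha
    refine hPclos _ ?_ a (hD0gen a ha)
    intro b hb
    refine Submodule.span_induction (p := fun x _ => P x)
      (fun x hx => hnorm0 x hx) hP0 (fun x y _ _ hx hy => hPadd x y hx hy)
      (fun c x _ hx => hPsmul c x hx) hb
  -- P holds on each homogeneous subspace
  have hPt : ∀ t : Γ, ∀ a ∈ Agr t, P a := by
    intro t a ha
    apply hkey
    · apply hPA0
      have := hgr_mul (-t) t a ha (star a) (hgr_star t a ha)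
      rwa [add_neg_cancel] at this
    · apply hPA0
      have := hgr_mul t (-t) (star a) (hgr_star t a ha) a ha
      rwa [neg_add_cancel] at this
  -- conclude
  intro a
  have ha : a ∈ closure (↑(⨆ t, Agr t) : Set A) := hgr_dense a
  refine hPclos _ ?_ a ha
  intro b hb
  exact Submodule.iSup_induction (motive := P) Agr hb (fun t x hx => hPt t x hx) hP0 (fun x y hx hy => hPadd x y hx hy)
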